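/- Let F : ℝⁿ → ℝ be differentiable and μ-convex (μ ∈ ℝ, possibly negative). Suppose x^{(k+1)} = prox_{βF}(x̃^{(k)}) where x̃^{(k)} = Σ_{i=1}^τ ξ_i x^{(k-τ+i)}. Then F(x^{(k)}) ≥ F(x^{(k+1)}) + (β/2)‖∇F(x^{(k+1)})‖² + (1/(2β) + μ/2)‖x^{(k+1)} − x^{(k)}‖² − (1/(2β))‖Σ_{i=1}^{τ-1} ξ_i (x^{(k-τ+i)} − x^{(k)})‖², assuming Σ_{i=1}^τ ξ_i = 1. -/

import Mathlib

open scoped RealInnerProductSpace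

theorem stmt11 (n : ℕ) (τ : ℕ) (hτ : 1 ≤ τ) (μ β : ℝ) (hβ : 0 < β)
    (ξ : ℕ → ℝ) (hξsum : ∑ i ∈ Finset.Icc 1 τ, ξ i = 1)
    (F : EuclideanSpace ℝ (Fin n) → ℝ) (hF : Differentiable ℝ F)
    (hμc : ∀ x y, F y ≥ F x + ⟪gradient F x, y - x⟫ + μ / 2 * ‖y - x‖ ^ 2)
    (x : ℕ → EuclideanSpace ℝ (Fin n)) (k : ℕ) (hk : τ ≤ k + 1)
    (hprox : IsMinOn (fun z => F z +
        1 / (2 * β) * ‖z - ∑ i ∈ Finset.Icc 1 τ, ξ i • x (k + i - τ)‖ ^ 2)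
      Set.univ (x (k + 1))) :
    F (x k) ≥ F (x (k + 1)) + β / 2 * ‖gradient F (x (k + 1))‖ ^ 2
      + (1 / (2 * β) + μ / 2) * ‖x (k + 1) - x k‖ ^ 2
      - 1 / (2 * β) * ‖∑ i ∈ Finset.Icc 1 (τ - 1), ξ i • (x (k + i - τ) - x k)‖ ^ 2 := by
  set c := ∑ i ∈ Finset.Icc 1 τ, ξ i • x (k + i - τ) with hc
  set p := x (k + 1) with hp
  set q := x k with hq
  set g := gradient F p with hg
  set s := ∑ i ∈ Finset.Icc 1 (τ - 1), ξ i • (x (k + i - τ) - q) with hs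
  -- Step A: optimality condition β • g = c - p
  have hfd : HasFDerivAt (fun z => z - c) (ContinuousLinearMap.id ℝ _) p :=
    (hasFDerivAt_id p).sub_const c
  have hq2 : HasFDerivAt (fun z => ⟪z - c, z - c⟫)
      ((fderivInnerCLM ℝ (p - c, p - c)).comp
        ((ContinuousLinearMap.id ℝ _).prod (ContinuousLinearMap.id ℝ _))) p :=
    hfd.inner ℝ hfd
  have hFg : HasFDerivAt F ((InnerProductSpace.toDual ℝ _) g) p :=
    (hF p).hasGradientAt.hasFDerivAt
  have hG : HasFDerivAt (fun z => F z + 1 / (2 * β) * ⟪z - c, z - c⟫)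
      ((InnerProductSpace.toDual ℝ _) g + (1 / (2 * β)) •
        ((fderivInnerCLM ℝ (p - c, p - c)).comp
          ((ContinuousLinearMap.id ℝ _).prod (ContinuousLinearMap.id ℝ _)))) p :=
    hFg.add (hq2.const_mul _)
  have hGeq : (fun z => F z + 1 / (2 * β) * ⟪z - c, z - c⟫)
      = (fun z => F z + 1 / (2 * β) * ‖z - c‖ ^ 2) := by
    funext z; rw [real_inner_self_eq_norm_sq]
  rw [hGeq] at hG
  have hlocmin : IsLocalMin (fun z => F z + 1 / (2 * β) * ‖z - c‖ ^ 2) p :=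
    hprox.isLocalMin Filter.univ_mem
  have hD0 := hlocmin.hasFDerivAt_eq_zero hG
  have hkey : β • g = c - p := by
    have hv : ∀ v, ⟪g, v⟫ + 1 / (2 * β) * (⟪p - c, v⟫ + ⟪v, p - c⟫) = 0 := by
      intro v
      have := DFunLike.congr_fun hD0 v
      simpa [InnerProductSpace.toDual_apply_apply, fderivInnerCLM_apply] using this
    have h2 : ∀ v, ⟪β • g + (p - c), v⟫ = 0 := by
      intro v
      have h := hv v
      have hcomm : ⟪v, p - c⟫ = ⟪p - c, v⟫ := real_inner_comm _ _
      rw [hcomm] at h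
      rw [inner_add_left, real_inner_smul_left]
      generalize hA : (⟪p - c, v⟫ : ℝ) = A at h ⊢
      generalize hB : (⟪g, v⟫ : ℝ) = B at h ⊢
      field_simp at h
      linarith
    have h3 := h2 (β • g + (p - c))
    have hz : β • g + (p - c) = 0 := by
      rwa [real_inner_self_eq_norm_sq, pow_eq_zero_iff (by norm_num), norm_eq_zero] at h3
    have h4 := eq_neg_of_add_eq_zero_left hz
    rw [neg_sub] at h4
    exact h4
  -- Step B: s = c - q
  have hscq : s = c - q := by
    have h1 : c - q = ∑ i ∈ Finset.Icc 1 τ, ξ i • (x (k + i - τ) - q) := by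
      calc c - q = (∑ i ∈ Finset.Icc 1 τ, ξ i • x (k + i - τ))
            - (∑ i ∈ Finset.Icc 1 τ, ξ i) • q := by rw [hξsum, one_smul, hc]
        _ = ∑ i ∈ Finset.Icc 1 τ, (ξ i • x (k + i - τ) - ξ i • q) := by
            rw [Finset.sum_smul, ← Finset.sum_sub_distrib]
        _ = _ := by simp [smul_sub]
    obtain ⟨m, rfl⟩ : ∃ m, τ = m + 1 := ⟨τ - 1, (Nat.succ_pred_eq_of_pos hτ).symm⟩
    rw [h1, Finset.sum_Icc_succ_top (Nat.le_add_left 1 m)]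
    have hxk : x (k + (m + 1) - (m + 1)) = q := by
      rw [hq, Nat.add_sub_cancel]
    simp [hs, hxk, hq]
  -- Step C: inner product algebra
  have hrel : s = β • g + (p - q) := by rw [hscq, hkey]; abel
  have hnorm : ‖s‖ ^ 2 = β ^ 2 * ‖g‖ ^ 2 + 2 * (β * ⟪g, p - q⟫) + ‖p - q‖ ^ 2 := by
    rw [hrel, norm_add_sq_real, real_inner_smul_left, norm_smul]
    rw [Real.norm_eq_abs, abs_of_pos hβ]
    ring
  have e : 1 / (2 * β) * ‖s‖ ^ 2
      = β / 2 * ‖g‖ ^ 2 + ⟪g, p - q⟫ + 1 / (2 * β) * ‖p - q‖ ^ 2 := by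
    rw [hnorm]; field_simp
  have hmc := hμc p q
  have h1 : ⟪g, q - p⟫ = - ⟪g, p - q⟫ := by
    rw [← inner_neg_right]; congr 1; abel
  have h2 : ‖q - p‖ = ‖p - q‖ := norm_sub_rev _ _
  rw [← hg, h1, h2] at hmc
  linarith [hmc, e]
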